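/- Let ω > 0, b ∈ ℝ, l ∈ ℕ, p₁ ∈ ℂ, and let Ω : (0,1] → ℝ be continuous and bounded. Let (g_n)_{n∈ℤ} be twice continuously differentiable functions g_n : (0,1] → ℂ satisfying, for every n ∈ ℤ and every r ∈ (0,1]: g_n''(r) = (−b/r + n·ω − i·p₁ + l(l+1)/r²)·g_n(r) + i·Ω(r)·(g_{n+1}(r) − g_{n−1}(r)). Assume sup_{n≥0} sup_{r∈(0,1]} e^{r·√(nω)}·|g_n(r)| < ∞ and sup_{n<0} sup_{r∈(0,1]} |g_n(r)| < ∞. If g_n(1) = 0 and g_n'(1) = 0 (one-sided derivative at 1) for every n ∈ ℤ, then g_n(r) = 0 for every n ∈ ℤ and every r ∈ (0,1]. -/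

import Mathlib

open Set intervalIntegral MeasureTheory

private lemma sqrt_add_le' (x y : ℝ) (hx : 0 ≤ x) (hy : 0 ≤ y) :
    Real.sqrt (x + y) ≤ Real.sqrt x + Real.sqrt y := by
  nlinarith [Real.sqrt_nonneg x, Real.sqrt_nonneg y, Real.sqrt_nonneg (x + y),
    Real.sq_sqrt hx, Real.sq_sqrt hy, Real.sq_sqrt (add_nonneg hx hy)]

/-- FTC on `[r,1]` for functions differentiable within `(0,1]`. -/
private lemma ftc_ioc (f f' : ℝ → ℂ)
    (hf : ∀ t ∈ Set.Ioc (0:ℝ) 1, HasDerivWithinAt f (f' t) (Set.Ioc 0 1) t)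
    (hc : ContinuousOn f' (Set.Ioc 0 1)) (r : ℝ) (hr : r ∈ Set.Ioc (0:ℝ) 1) :
    ∫ t in r..1, f' t = f 1 - f r := by
  have hsub : Set.Icc r 1 ⊆ Set.Ioc (0:ℝ) 1 := fun x hx => ⟨lt_of_lt_of_le hr.1 hx.1, hx.2⟩
  apply intervalIntegral.integral_eq_sub_of_hasDeriv_right_of_le hr.2
  · exact fun x hx => ((hf x (hsub hx)).continuousWithinAt).mono hsub
  · intro x hx
    have hx' : x ∈ Set.Ioc (0:ℝ) 1 := ⟨lt_of_lt_of_le hr.1 hx.1.le, hx.2.le⟩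
    exact ((hf x hx').hasDerivAt (Ioc_mem_nhds hx'.1 hx.2)).hasDerivWithinAt
  · apply ContinuousOn.intervalIntegrable
    rw [Set.uIcc_of_le hr.2]
    exact hc.mono hsub

private lemma norm_int_le (f : ℝ → ℂ) (φ : ℝ → ℝ) (s : ℝ) (hs : s ≤ 1)
    (hfc : ContinuousOn f (Set.Icc s 1)) (hφc : ContinuousOn φ (Set.Icc s 1))
    (hle : ∀ t ∈ Set.Icc s 1, ‖f t‖ ≤ φ t) :
    ‖∫ t in s..1, f t‖ ≤ ∫ t in s..1, φ t := by
  refine le_trans (intervalIntegral.norm_integral_le_integral_norm hs) ?_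
  apply intervalIntegral.integral_mono_on hs
  · apply ContinuousOn.intervalIntegrable; rw [Set.uIcc_of_le hs]; exact hfc.norm
  · apply ContinuousOn.intervalIntegrable; rw [Set.uIcc_of_le hs]; exact hφc
  · exact hle

private lemma int_one_sub_pow (s : ℝ) (k : ℕ) :
    ∫ t in s..1, (1 - t) ^ k = (1 - s) ^ (k + 1) / ((k : ℝ) + 1) := by
  have h := intervalIntegral.integral_comp_sub_left (a := s) (b := 1) (fun t => t ^ k) 1
  simp only [sub_self] at h
  rw [h, integral_pow]
  norm_num

/-- Lemma 30 in contrapositive form: for the radial differential–difference system (80),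
a solution `(g_n)` that is bounded (with the weight `e^{r√(nω)}` for `n ≥ 0`) and whose
Cauchy data at `r = 1` vanish for every `n` must vanish identically on `(0,1]`. -/
theorem stmt_10 (ω : ℝ) (hω : 0 < ω) (b : ℝ) (l : ℕ) (p₁ : ℂ)
    (Ω : ℝ → ℝ) (hΩc : ContinuousOn Ω (Set.Ioc 0 1))
    (hΩb : ∃ CΩ : ℝ, ∀ r ∈ Set.Ioc (0 : ℝ) 1, |Ω r| ≤ CΩ)
    (g g' g'' : ℤ → ℝ → ℂ)
    (hg : ∀ n : ℤ, ∀ r ∈ Set.Ioc (0 : ℝ) 1, HasDerivWithinAt (g n) (g' n r) (Set.Ioc 0 1) r)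
    (hg' : ∀ n : ℤ, ∀ r ∈ Set.Ioc (0 : ℝ) 1, HasDerivWithinAt (g' n) (g'' n r) (Set.Ioc 0 1) r)
    (hg'' : ∀ n : ℤ, ContinuousOn (g'' n) (Set.Ioc 0 1))
    (hode : ∀ n : ℤ, ∀ r ∈ Set.Ioc (0 : ℝ) 1,
      g'' n r = (-(b : ℂ) / (r : ℂ) + (n : ℂ) * (ω : ℂ) - Complex.I * p₁
          + (l * (l + 1) : ℂ) / (r : ℂ) ^ 2) * g n r
        + Complex.I * (Ω r : ℂ) * (g (n + 1) r - g (n - 1) r))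
    (hbddPos : ∃ C : ℝ, ∀ n : ℤ, 0 ≤ n → ∀ r ∈ Set.Ioc (0 : ℝ) 1,
      Real.exp (r * Real.sqrt ((n : ℝ) * ω)) * ‖g n r‖ ≤ C)
    (hbddNeg : ∃ C : ℝ, ∀ n : ℤ, n < 0 → ∀ r ∈ Set.Ioc (0 : ℝ) 1, ‖g n r‖ ≤ C)
    (hbc : ∀ n : ℤ, g n 1 = 0 ∧ g' n 1 = 0) :
    ∀ n : ℤ, ∀ r ∈ Set.Ioc (0 : ℝ) 1, g n r = 0 := by
  classical
  obtain ⟨CΩ, hCΩ⟩ := hΩb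
  obtain ⟨C₁, hC₁⟩ := hbddPos
  obtain ⟨C₂, hC₂⟩ := hbddNeg
  intro n₀ r₀ hr₀
  have hr₀0 : (0:ℝ) < r₀ := hr₀.1
  have hr₀1 : r₀ ≤ 1 := hr₀.2
  -- weights and complex square roots of n·ω
  set a : ℤ → ℝ := fun n => if 0 ≤ n then Real.sqrt ((n : ℝ) * ω) else 0 with ha_def
  set lam : ℤ → ℂ := fun n => if 0 ≤ n then ((Real.sqrt ((n : ℝ) * ω) : ℝ) : ℂ)
      else Complex.I * ((Real.sqrt ((-(n : ℝ)) * ω) : ℝ) : ℂ) with hlam_def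
  have ha_nonneg : ∀ n, 0 ≤ a n := by
    intro n; simp only [ha_def]
    split
    · exact Real.sqrt_nonneg _
    · exact le_rfl
  have hlam_sq : ∀ n, lam n * lam n = (n : ℂ) * (ω : ℂ) := by
    intro n
    by_cases hn : 0 ≤ n
    · have h0 : (0:ℝ) ≤ (n:ℝ) * ω := mul_nonneg (by exact_mod_cast hn) hω.le
      have hs : Real.sqrt ((n:ℝ)*ω) * Real.sqrt ((n:ℝ)*ω) = (n:ℝ)*ω := Real.mul_self_sqrt h0
      simp only [hlam_def, if_pos hn]
      rw [← Complex.ofReal_mul, hs]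
      push_cast; ring
    · have hn0 : (n:ℝ) < 0 := by exact_mod_cast not_le.mp hn
      have hn' : (0:ℝ) ≤ (-(n:ℝ)) * ω := by nlinarith
      have hs : Real.sqrt ((-(n:ℝ))*ω) * Real.sqrt ((-(n:ℝ))*ω) = (-(n:ℝ))*ω :=
        Real.mul_self_sqrt hn'
      simp only [hlam_def, if_neg hn]
      have hrw : Complex.I * ((Real.sqrt ((-(n:ℝ))*ω) : ℝ) : ℂ)
            * (Complex.I * ((Real.sqrt ((-(n:ℝ))*ω) : ℝ) : ℂ))
          = (Complex.I * Complex.I)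
            * (((Real.sqrt ((-(n:ℝ))*ω) * Real.sqrt ((-(n:ℝ))*ω) : ℝ)) : ℂ) := by
        push_cast; ring
      rw [hrw, Complex.I_mul_I, hs]
      push_cast; ring
  have hre : ∀ (m : ℤ) (t : ℝ), (lam m * (t:ℂ)).re = a m * t := by
    intro m t
    by_cases hm : 0 ≤ m
    · simp only [hlam_def, ha_def, if_pos hm, ← Complex.ofReal_mul, Complex.ofReal_re]
    · simp only [hlam_def, ha_def, if_neg hm]
      simp [Complex.mul_re]
  have hnorm_exp : ∀ (m : ℤ) (t : ℝ), ‖Complex.exp (lam m * t)‖ = Real.exp (a m * t) := by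
    intro m t
    rw [Complex.norm_exp, hre m t]
  have hnorm_exp_neg : ∀ (m : ℤ) (t : ℝ),
      ‖Complex.exp (-(lam m) * t)‖ = Real.exp (-(a m * t)) := by
    intro m t
    rw [Complex.norm_exp, neg_mul, Complex.neg_re, hre m t]
  have hcancel : ∀ x : ℝ, Real.exp x * Real.exp (-x) = 1 := fun x => by
    rw [← Real.exp_add, add_neg_cancel, Real.exp_zero]
  -- weight shift estimates
  have ha_mono : ∀ n : ℤ, a n ≤ a (n + 1) := by
    intro n
    by_cases hn : 0 ≤ n
    · have hn1 : (0:ℤ) ≤ n + 1 := by omega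
      simp only [ha_def, if_pos hn, if_pos hn1]
      apply Real.sqrt_le_sqrt
      have h1 : (n:ℝ) ≤ ((n+1:ℤ):ℝ) := by push_cast; linarith
      nlinarith
    · have h0 : a n = 0 := by simp [ha_def, hn]
      rw [h0]; exact ha_nonneg _
  have ha_step : ∀ n : ℤ, a n ≤ a (n - 1) + Real.sqrt ω := by
    intro n
    rcases lt_or_ge n 1 with hn | hn
    · have h0 : a n = 0 := by
        rcases lt_or_ge n 0 with h | h
        · simp [ha_def, not_le.mpr h]
        · have hz : n = 0 := by omega
          simp [ha_def, hz]
      rw [h0]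
      exact add_nonneg (ha_nonneg _) (Real.sqrt_nonneg _)
    · have h1 : (0:ℤ) ≤ n := by omega
      have h2 : (0:ℤ) ≤ n - 1 := by omega
      simp only [ha_def, if_pos h1, if_pos h2]
      have heq : (n:ℝ) * ω = ((n-1:ℤ):ℝ) * ω + ω := by push_cast; ring
      rw [heq]
      exact sqrt_add_le' _ _ (mul_nonneg (by exact_mod_cast h2) hω.le) hω.le
  -- constants
  set C₀ : ℝ := max (max C₁ C₂) 0 with hC₀def
  have hC₀0 : 0 ≤ C₀ := le_max_right _ _
  set CΩ' : ℝ := max CΩ 0 with hCΩ'def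
  have hCΩ'0 : 0 ≤ CΩ' := le_max_right _ _
  set D : ℝ := |b| / r₀ + ‖p₁‖ + (l * (l + 1) : ℝ) / r₀ ^ 2 with hDdef
  have hD0 : 0 ≤ D := by
    apply add_nonneg (add_nonneg (div_nonneg (abs_nonneg _) hr₀0.le) (norm_nonneg _))
    positivity
  set M : ℝ := D + 2 * CΩ' * Real.exp (Real.sqrt ω) with hMdef
  have hM0 : 0 ≤ M := by positivity
  -- a priori bound
  have hbase : ∀ n, ∀ t ∈ Set.Ioc (0:ℝ) 1, Real.exp (a n * t) * ‖g n t‖ ≤ C₀ := by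
    intro n t ht
    rcases le_or_gt 0 n with hn | hn
    · have h := hC₁ n hn t ht
      simp only [ha_def, if_pos hn]
      rw [mul_comm (Real.sqrt ((n:ℝ) * ω)) t]
      exact h.trans ((le_max_left _ _).trans (le_max_left _ _))
    · have h := hC₂ n hn t ht
      simp only [ha_def, if_neg (not_le.mpr hn)]
      rw [zero_mul, Real.exp_zero, one_mul]
      exact h.trans ((le_max_right _ _).trans (le_max_left _ _))
  -- continuity
  have hgc : ∀ n, ContinuousOn (g n) (Set.Ioc 0 1) :=
    fun n t ht => (hg n t ht).continuousWithinAt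
  have hg'c : ∀ n, ContinuousOn (g' n) (Set.Ioc 0 1) :=
    fun n t ht => (hg' n t ht).continuousWithinAt
  set R : ℤ → ℝ → ℂ := fun n t => g'' n t - (n : ℂ) * (ω : ℂ) * g n t with hRdef
  have hRc : ∀ n, ContinuousOn (R n) (Set.Ioc 0 1) :=
    fun n => (hg'' n).sub (continuousOn_const.mul (hgc n))
  have hexpc : ∀ c : ℂ, Continuous (fun t : ℝ => Complex.exp (c * (t:ℂ))) := fun c =>
    Complex.continuous_exp.comp (continuous_const.mul Complex.continuous_ofReal)
  -- coefficient bound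
  have hcoef : ∀ t ∈ Set.Icc r₀ 1,
      ‖(-(b:ℂ)/(t:ℂ) - Complex.I * p₁ + ((l:ℂ) * ((l:ℂ) + 1))/(t:ℂ)^2)‖ ≤ D := by
    intro t ht
    have ht0 : 0 < t := lt_of_lt_of_le hr₀0 ht.1
    have htr : r₀ ≤ t := ht.1
    have h1 : ‖(-(b:ℂ)/(t:ℂ))‖ = |b| / t := by
      rw [norm_div, norm_neg, Complex.norm_real, Complex.norm_real, Real.norm_eq_abs,
        Real.norm_eq_abs, abs_of_pos ht0]
    have h2 : ‖((l:ℂ) * ((l:ℂ) + 1))/(t:ℂ)^2‖ = (l * (l + 1) : ℝ) / t ^ 2 := by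
      have hnum : ((l:ℂ) * ((l:ℂ) + 1)) = (((l * (l + 1) : ℝ)) : ℂ) := by push_cast; ring
      rw [hnum, norm_div, Complex.norm_real, Real.norm_eq_abs, norm_pow, Complex.norm_real,
        Real.norm_eq_abs, abs_of_pos ht0, abs_of_nonneg (by positivity)]
    calc ‖(-(b:ℂ)/(t:ℂ) - Complex.I * p₁ + ((l:ℂ) * ((l:ℂ) + 1))/(t:ℂ)^2)‖
        ≤ ‖(-(b:ℂ)/(t:ℂ) - Complex.I * p₁)‖ + ‖((l:ℂ) * ((l:ℂ) + 1))/(t:ℂ)^2‖ :=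
          norm_add_le _ _
      _ ≤ ‖(-(b:ℂ)/(t:ℂ))‖ + ‖Complex.I * p₁‖ + ‖((l:ℂ) * ((l:ℂ) + 1))/(t:ℂ)^2‖ := by
          have := norm_sub_le (-(b:ℂ)/(t:ℂ)) (Complex.I * p₁)
          linarith
      _ = |b| / t + ‖p₁‖ + (l * (l + 1) : ℝ) / t ^ 2 := by
          rw [h1, h2, norm_mul, Complex.norm_I, one_mul]
      _ ≤ D := by
          rw [hDdef]
          have e1 : |b| / t ≤ |b| / r₀ := by gcongr
          have e2 : (l * (l + 1) : ℝ) / t ^ 2 ≤ (l * (l + 1) : ℝ) / r₀ ^ 2 := by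
            gcongr
          linarith
  -- weighted bound on R
  have hkey : ∀ (β : ℝ → ℝ), (∀ t ∈ Set.Icc r₀ 1, 0 ≤ β t) →
      (∀ m, ∀ t ∈ Set.Icc r₀ 1, Real.exp (a m * t) * ‖g m t‖ ≤ β t) →
      ∀ n, ∀ t ∈ Set.Icc r₀ 1, Real.exp (a n * t) * ‖R n t‖ ≤ M * β t := by
    intro β hβ0 hβ n t ht
    have htm : t ∈ Set.Ioc (0:ℝ) 1 := ⟨lt_of_lt_of_le hr₀0 ht.1, ht.2⟩
    have ht0 : 0 < t := htm.1
    have ht1 : t ≤ 1 := ht.2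
    have hR : R n t = (-(b:ℂ)/(t:ℂ) - Complex.I * p₁ + ((l:ℂ) * ((l:ℂ) + 1))/(t:ℂ)^2) * g n t
        + Complex.I * (Ω t : ℂ) * (g (n+1) t - g (n-1) t) := by
      simp only [hRdef]
      rw [hode n t htm]; ring
    have hshift : ∀ m : ℤ, a n ≤ a m + Real.sqrt ω →
        Real.exp (a n * t) * ‖g m t‖ ≤ Real.exp (Real.sqrt ω) * β t := by
      intro m hm
      have h1 : a n * t ≤ a m * t + Real.sqrt ω := by
        nlinarith [ha_nonneg m, ha_nonneg n, Real.sqrt_nonneg ω]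
      calc Real.exp (a n * t) * ‖g m t‖
          ≤ Real.exp (a m * t + Real.sqrt ω) * ‖g m t‖ :=
            mul_le_mul_of_nonneg_right (Real.exp_le_exp.mpr h1) (norm_nonneg _)
        _ = Real.exp (Real.sqrt ω) * (Real.exp (a m * t) * ‖g m t‖) := by
            rw [Real.exp_add]; ring
        _ ≤ Real.exp (Real.sqrt ω) * β t :=
            mul_le_mul_of_nonneg_left (hβ m t ht) (Real.exp_pos _).le
    have hΩt : |Ω t| ≤ CΩ' := (hCΩ t htm).trans (le_max_left _ _)
    have hRnorm : ‖R n t‖ ≤ D * ‖g n t‖ + CΩ' * (‖g (n+1) t‖ + ‖g (n-1) t‖) := by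
      rw [hR]
      calc ‖(-(b:ℂ)/(t:ℂ) - Complex.I * p₁ + ((l:ℂ) * ((l:ℂ) + 1))/(t:ℂ)^2) * g n t
            + Complex.I * (Ω t : ℂ) * (g (n+1) t - g (n-1) t)‖
          ≤ ‖(-(b:ℂ)/(t:ℂ) - Complex.I * p₁ + ((l:ℂ) * ((l:ℂ) + 1))/(t:ℂ)^2) * g n t‖
            + ‖Complex.I * (Ω t : ℂ) * (g (n+1) t - g (n-1) t)‖ := norm_add_le _ _
        _ ≤ D * ‖g n t‖ + CΩ' * (‖g (n+1) t‖ + ‖g (n-1) t‖) := by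
            apply add_le_add
            · rw [norm_mul]
              exact mul_le_mul_of_nonneg_right (hcoef t ht) (norm_nonneg _)
            · rw [norm_mul, norm_mul, Complex.norm_I, one_mul, Complex.norm_real,
                Real.norm_eq_abs]
              exact mul_le_mul hΩt (norm_sub_le _ _) (norm_nonneg _) hCΩ'0
    have hstep1 : a n ≤ a (n+1) + Real.sqrt ω :=
      (ha_mono n).trans (le_add_of_nonneg_right (Real.sqrt_nonneg _))
    have hstep2 : a n ≤ a (n-1) + Real.sqrt ω := ha_step n
    have hexp0 : (0:ℝ) < Real.exp (a n * t) := Real.exp_pos _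
    calc Real.exp (a n * t) * ‖R n t‖
        ≤ Real.exp (a n * t) * (D * ‖g n t‖ + CΩ' * (‖g (n+1) t‖ + ‖g (n-1) t‖)) :=
          mul_le_mul_of_nonneg_left hRnorm hexp0.le
      _ = D * (Real.exp (a n * t) * ‖g n t‖)
          + CΩ' * (Real.exp (a n * t) * ‖g (n+1) t‖ + Real.exp (a n * t) * ‖g (n-1) t‖) := by
          ring
      _ ≤ D * β t + CΩ' * (Real.exp (Real.sqrt ω) * β t + Real.exp (Real.sqrt ω) * β t) := by
          apply add_le_add
          · exact mul_le_mul_of_nonneg_left (hβ n t ht) hD0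
          · exact mul_le_mul_of_nonneg_left
              (add_le_add (hshift (n+1) hstep1) (hshift (n-1) hstep2)) hCΩ'0
      _ = M * β t := by rw [hMdef]; ring
  -- main induction
  have hmain : ∀ k : ℕ, ∀ n, ∀ t ∈ Set.Icc r₀ 1,
      Real.exp (a n * t) * ‖g n t‖ ≤ C₀ * M ^ k / (k.factorial : ℝ) * (1 - t) ^ k := by
    intro k
    induction k with
    | zero =>
      intro n t ht
      simpa using hbase n t ⟨lt_of_lt_of_le hr₀0 ht.1, ht.2⟩
    | succ k ih =>
      have hfactpos : (0:ℝ) < (k.factorial : ℝ) := by exact_mod_cast k.factorial_pos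
      set Bk : ℝ := C₀ * M ^ k / (k.factorial : ℝ) with hBk
      have hBk0 : 0 ≤ Bk := by rw [hBk]; positivity
      have hβ0 : ∀ t ∈ Set.Icc r₀ 1, (0:ℝ) ≤ Bk * (1 - t) ^ k := by
        intro t ht
        have h1 : (0:ℝ) ≤ 1 - t := by linarith [ht.2]
        positivity
      intro n r hr
      have hrm : r ∈ Set.Ioc (0:ℝ) 1 := ⟨lt_of_lt_of_le hr₀0 hr.1, hr.2⟩
      have hr1 : r ≤ 1 := hr.2
      have hIccsub : ∀ {s : ℝ}, r ≤ s → Set.Icc s 1 ⊆ Set.Ioc (0:ℝ) 1 :=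
        fun {s} hs x hx => ⟨lt_of_lt_of_le hrm.1 (hs.trans hx.1), hx.2⟩
      have hRb := hkey (fun t => Bk * (1 - t) ^ k) hβ0 ih n
      -- local functions
      set u : ℝ → ℂ := fun t => g' n t + lam n * g n t with hu
      set v : ℝ → ℂ := fun t => Complex.exp (-(lam n) * t) * u t with hv
      set q : ℝ → ℂ := fun s => Complex.exp (lam n * s) * u s with hq
      set p : ℝ → ℂ := fun t => Complex.exp (lam n * t) * g n t with hp
      have huc : ContinuousOn u (Set.Ioc 0 1) :=
        (hg'c n).add (continuousOn_const.mul (hgc n))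
      have hwc : ContinuousOn (fun t : ℝ => Complex.exp (-(lam n) * t) * R n t) (Set.Ioc 0 1) :=
        ((hexpc (-(lam n))).continuousOn).mul (hRc n)
      have hqc : ContinuousOn q (Set.Ioc 0 1) := ((hexpc (lam n)).continuousOn).mul huc
      -- derivative of v
      have hvderiv : ∀ t ∈ Set.Ioc (0:ℝ) 1, HasDerivWithinAt v
          (Complex.exp (-(lam n) * t) * R n t) (Set.Ioc 0 1) t := by
        intro t htm
        have h1 : HasDerivAt (fun s : ℝ => ((s:ℂ))) 1 t := Complex.ofRealCLM.hasDerivAt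
        have h2 : HasDerivAt (fun s : ℝ => -(lam n) * (s:ℂ)) (-(lam n)) t := by
          simpa using h1.const_mul (-(lam n))
        have hexp : HasDerivAt (fun s : ℝ => Complex.exp (-(lam n) * s))
            (Complex.exp (-(lam n) * t) * (-(lam n))) t := h2.cexp
        have huD : HasDerivWithinAt u (g'' n t + lam n * g' n t) (Set.Ioc 0 1) t :=
          (hg' n t htm).add ((hg n t htm).const_mul (lam n))
        have hmul := (hexp.hasDerivWithinAt).mul huD
        have heq : Complex.exp (-(lam n) * t) * (-(lam n)) * u t
            + Complex.exp (-(lam n) * t) * (g'' n t + lam n * g' n t)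
            = Complex.exp (-(lam n) * t) * R n t := by
          simp only [hu, hRdef]
          rw [← hlam_sq n]; ring
        exact heq ▸ hmul
      -- derivative of p
      have hpderiv : ∀ t ∈ Set.Ioc (0:ℝ) 1, HasDerivWithinAt p (q t) (Set.Ioc 0 1) t := by
        intro t htm
        have h1 : HasDerivAt (fun s : ℝ => ((s:ℂ))) 1 t := Complex.ofRealCLM.hasDerivAt
        have h2 : HasDerivAt (fun s : ℝ => lam n * (s:ℂ)) (lam n) t := by
          simpa using h1.const_mul (lam n)
        have hexp : HasDerivAt (fun s : ℝ => Complex.exp (lam n * s))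
            (Complex.exp (lam n * t) * lam n) t := h2.cexp
        have hmul := (hexp.hasDerivWithinAt).mul (hg n t htm)
        have heq : Complex.exp (lam n * t) * lam n * g n t
            + Complex.exp (lam n * t) * g' n t = q t := by
          simp only [hq, hu]; ring
        exact heq ▸ hmul
      have hv1 : v 1 = 0 := by
        simp [hv, hu, (hbc n).1, (hbc n).2]
      have hp1 : p 1 = 0 := by simp [hp, (hbc n).1]
      have hvrep : ∀ s ∈ Set.Icc r 1,
          v s = -∫ t in s..1, Complex.exp (-(lam n) * t) * R n t := by
        intro s hs
        have hsm : s ∈ Set.Ioc (0:ℝ) 1 := ⟨lt_of_lt_of_le hrm.1 hs.1, hs.2⟩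
        have h := ftc_ioc v _ hvderiv hwc s hsm
        rw [hv1, zero_sub] at h
        rw [h, neg_neg]
      have hprep : p r = -∫ s in r..1, q s := by
        have h := ftc_ioc p q hpderiv hqc r hrm
        rw [hp1, zero_sub] at h
        rw [h, neg_neg]
      -- estimate on v
      have hvbound : ∀ s ∈ Set.Icc r 1, ‖v s‖ ≤
          (Real.exp (-(a n * s)) * Real.exp (-(a n * s)) * M * Bk)
            * ((1 - s) ^ (k + 1) / ((k : ℝ) + 1)) := by
        intro s hs
        have hs1 : s ≤ 1 := hs.2
        have hsr₀ : r₀ ≤ s := hr.1.trans hs.1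
        have hptw : ∀ t ∈ Set.Icc s 1, ‖Complex.exp (-(lam n) * t) * R n t‖ ≤
            (Real.exp (-(a n * s)) * Real.exp (-(a n * s)) * M * Bk) * (1 - t) ^ k := by
          intro t ht
          have htm : t ∈ Set.Icc r₀ 1 := ⟨hsr₀.trans ht.1, ht.2⟩
          have hRt := hRb t htm
          have hMβ0 : (0:ℝ) ≤ M * (Bk * (1 - t) ^ k) := mul_nonneg hM0 (hβ0 t htm)
          have hR' : ‖R n t‖ ≤ Real.exp (-(a n * t)) * (M * (Bk * (1 - t) ^ k)) := by
            have h := mul_le_mul_of_nonneg_left hRt (Real.exp_pos (-(a n * t))).le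
            rwa [← mul_assoc, ← Real.exp_add, neg_add_cancel, Real.exp_zero, one_mul] at h
          have he : Real.exp (-(a n * t)) ≤ Real.exp (-(a n * s)) := by
            apply Real.exp_le_exp.mpr
            have := mul_le_mul_of_nonneg_left ht.1 (ha_nonneg n)
            linarith
          calc ‖Complex.exp (-(lam n) * t) * R n t‖
              = Real.exp (-(a n * t)) * ‖R n t‖ := by rw [norm_mul, hnorm_exp_neg]
            _ ≤ Real.exp (-(a n * t)) * (Real.exp (-(a n * t)) * (M * (Bk * (1 - t) ^ k))) :=
                mul_le_mul_of_nonneg_left hR' (Real.exp_pos _).le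
            _ = (Real.exp (-(a n * t)) * Real.exp (-(a n * t))) * (M * (Bk * (1 - t) ^ k)) := by
                ring
            _ ≤ (Real.exp (-(a n * s)) * Real.exp (-(a n * s))) * (M * (Bk * (1 - t) ^ k)) :=
                mul_le_mul_of_nonneg_right
                  (mul_le_mul he he (Real.exp_pos _).le (Real.exp_pos _).le) hMβ0
            _ = (Real.exp (-(a n * s)) * Real.exp (-(a n * s)) * M * Bk) * (1 - t) ^ k := by
                ring
        rw [hvrep s hs, norm_neg]
        have hcontf : ContinuousOn (fun t : ℝ => Complex.exp (-(lam n) * t) * R n t)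
            (Set.Icc s 1) := hwc.mono (hIccsub hs.1)
        have hcontφ : ContinuousOn
            (fun t => (Real.exp (-(a n * s)) * Real.exp (-(a n * s)) * M * Bk) * (1 - t) ^ k)
            (Set.Icc s 1) :=
          (continuous_const.mul ((continuous_const.sub continuous_id).pow k)).continuousOn
        have h1 := norm_int_le _ _ s hs1 hcontf hcontφ hptw
        refine h1.trans (le_of_eq ?_)
        rw [intervalIntegral.integral_const_mul, int_one_sub_pow]
      -- estimate on q
      have hqbound : ∀ s ∈ Set.Icc r 1, ‖q s‖ ≤
          (M * Bk / ((k : ℝ) + 1)) * (1 - s) ^ (k + 1) := by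
        intro s hs
        have hvs : ‖v s‖ = Real.exp (-(a n * s)) * ‖u s‖ := by
          simp only [hv]; rw [norm_mul, hnorm_exp_neg]
        have hus : ‖u s‖ = Real.exp (a n * s) * ‖v s‖ := by
          rw [hvs, ← mul_assoc, hcancel, one_mul]
        have hqs : ‖q s‖ = Real.exp (a n * s) * (Real.exp (a n * s) * ‖v s‖) := by
          simp only [hq]; rw [norm_mul, hnorm_exp, hus]
        have hs1pos : (0:ℝ) ≤ 1 - s := by linarith [hs.2]
        calc ‖q s‖ = Real.exp (a n * s) * (Real.exp (a n * s) * ‖v s‖) := hqs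
          _ ≤ Real.exp (a n * s) * (Real.exp (a n * s) *
              ((Real.exp (-(a n * s)) * Real.exp (-(a n * s)) * M * Bk)
                * ((1 - s) ^ (k + 1) / ((k : ℝ) + 1)))) := by
              apply mul_le_mul_of_nonneg_left _ (Real.exp_pos _).le
              exact mul_le_mul_of_nonneg_left (hvbound s hs) (Real.exp_pos _).le
          _ = (Real.exp (a n * s) * Real.exp (-(a n * s)))
              * ((Real.exp (a n * s) * Real.exp (-(a n * s)))
              * ((M * Bk) * ((1 - s) ^ (k + 1) / ((k : ℝ) + 1)))) := by ring
          _ = (M * Bk / ((k : ℝ) + 1)) * (1 - s) ^ (k + 1) := by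
              rw [hcancel]; ring
      -- conclude the induction step
      have hpr : Real.exp (a n * r) * ‖g n r‖ = ‖p r‖ := by
        simp only [hp]; rw [norm_mul, hnorm_exp]
      have hcontq : ContinuousOn q (Set.Icc r 1) := hqc.mono (hIccsub le_rfl)
      have hcontΦ : ContinuousOn
          (fun s => (M * Bk / ((k : ℝ) + 1)) * (1 - s) ^ (k + 1)) (Set.Icc r 1) :=
        (continuous_const.mul ((continuous_const.sub continuous_id).pow (k+1))).continuousOn
      have h2 := norm_int_le q _ r hr1 hcontq hcontΦ hqbound
      have h3 : (∫ s in r..1, (M * Bk / ((k : ℝ) + 1)) * (1 - s) ^ (k + 1))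
          = (M * Bk / ((k : ℝ) + 1)) * ((1 - r) ^ (k + 1 + 1) / (((k + 1 : ℕ) : ℝ) + 1)) := by
        rw [intervalIntegral.integral_const_mul, int_one_sub_pow]
      have hfact1 : (((k+1).factorial : ℕ) : ℝ) = (k.factorial : ℝ) * ((k : ℝ) + 1) := by
        rw [Nat.factorial_succ]; push_cast; ring
      have hfne : (k.factorial : ℝ) ≠ 0 := ne_of_gt hfactpos
      have hkne : ((k : ℝ) + 1) ≠ 0 := by positivity
      have hAeq : M * Bk / ((k : ℝ) + 1) = C₀ * M ^ (k+1) / (((k+1).factorial : ℕ) : ℝ) := by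
        rw [hBk, hfact1]
        field_simp
        ring
      have hMBk0 : (0:ℝ) ≤ M * Bk / ((k : ℝ) + 1) := by
        apply div_nonneg (mul_nonneg hM0 hBk0); positivity
      have hple : (1 - r) ^ (k + 1 + 1) / (((k + 1 : ℕ) : ℝ) + 1) ≤ (1 - r) ^ (k + 1) := by
        have h1r0 : (0:ℝ) ≤ 1 - r := by linarith [hr.2]
        have h1r1 : (1:ℝ) - r ≤ 1 := by
          have := lt_of_lt_of_le hr₀0 hr.1
          linarith
        have hq1 : (1 - r) ^ (k + 1 + 1) ≤ (1 - r) ^ (k + 1) :=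
          pow_le_pow_of_le_one h1r0 h1r1 (by omega)
        have hq2 : (1 - r) ^ (k + 1 + 1) / (((k + 1 : ℕ) : ℝ) + 1) ≤ (1 - r) ^ (k + 1 + 1) := by
          apply div_le_self (by positivity) (by push_cast; linarith [Nat.cast_nonneg (α := ℝ) k])
        linarith
      calc Real.exp (a n * r) * ‖g n r‖ = ‖p r‖ := hpr
        _ = ‖-∫ s in r..1, q s‖ := by rw [hprep]
        _ = ‖∫ s in r..1, q s‖ := norm_neg _
        _ ≤ ∫ s in r..1, (M * Bk / ((k : ℝ) + 1)) * (1 - s) ^ (k + 1) := h2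
        _ = (M * Bk / ((k : ℝ) + 1)) * ((1 - r) ^ (k + 1 + 1) / (((k + 1 : ℕ) : ℝ) + 1)) := h3
        _ ≤ (M * Bk / ((k : ℝ) + 1)) * (1 - r) ^ (k + 1) :=
            mul_le_mul_of_nonneg_left hple hMBk0
        _ = C₀ * M ^ (k+1) / (((k+1).factorial : ℕ) : ℝ) * (1 - r) ^ (k + 1) := by rw [hAeq]
  -- conclusion
  have hfin : ∀ k : ℕ, Real.exp (a n₀ * r₀) * ‖g n₀ r₀‖
      ≤ C₀ * (M * (1 - r₀)) ^ k / (k.factorial : ℝ) := by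
    intro k
    have h := hmain k n₀ r₀ ⟨le_refl r₀, hr₀1⟩
    calc Real.exp (a n₀ * r₀) * ‖g n₀ r₀‖
        ≤ C₀ * M ^ k / (k.factorial : ℝ) * (1 - r₀) ^ k := h
      _ = C₀ * (M * (1 - r₀)) ^ k / (k.factorial : ℝ) := by rw [mul_pow]; ring
  have htend : Filter.Tendsto (fun k : ℕ => C₀ * (M * (1 - r₀)) ^ k / (k.factorial : ℝ))
      Filter.atTop (nhds 0) := by
    have h := FloorSemiring.tendsto_pow_div_factorial_atTop (K := ℝ) (M * (1 - r₀))
    have h2 := h.const_mul C₀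
    simpa [mul_div_assoc] using h2
  have hle0 : Real.exp (a n₀ * r₀) * ‖g n₀ r₀‖ ≤ 0 := ge_of_tendsto' htend hfin
  have hnorm0 : ‖g n₀ r₀‖ = 0 := by
    have hpos := Real.exp_pos (a n₀ * r₀)
    nlinarith [norm_nonneg (g n₀ r₀)]
  exact norm_eq_zero.mp hnorm0
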